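/- Let D ⊂ ℂⁿ be a bounded domain. Let f_k, f : D → D be holomorphic maps whose images are relatively compact in D, and suppose f_k → f uniformly on compact subsets of D. Then τ(f_k) → τ(f), where τ(g) denotes the unique fixed point of a holomorphic self-map g of D with relatively compact image. In other words, the Heins map τ : Hol_c(D,D) → D is continuous. -/

import Mathlib

open Metric Set Function Filter Bornology

namespace HeinsProofAux

set_option linter.unusedSectionVars false

variable {E : Type*} [NormedAddCommGroup E] [NormedSpace ℂ E]

lemma line_hasDerivAt (F : E → E) {x : E} (v : E) (hF : DifferentiableAt ℂ F x) :
    HasDerivAt (fun t : ℂ => F (x + t • v)) (fderiv ℂ F x v) 0 := by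
  have h1 : HasDerivAt (fun t : ℂ => x + t • v) v 0 := by
    simpa using ((hasDerivAt_id (0:ℂ)).smul_const v).const_add x
  have h2 := hF.hasFDerivAt
  have h3 : HasFDerivAt F (fderiv ℂ F x) (x + (0:ℂ) • v) := by simpa using h2
  simpa [Function.comp_def] using h3.comp_hasDerivAt (0:ℂ) h1

lemma schwarz_center {F : E → E} {x : E} {s M : ℝ} (hs : 0 < s)
    (hF : DifferentiableOn ℂ F (ball x s))
    (hb : ∀ z ∈ ball x s, ‖F z - F x‖ < M) :
    ∀ z ∈ ball x s, ‖F z - F x‖ ≤ M / s * ‖z - x‖ := by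
  intro z hz
  rcases eq_or_ne z x with rfl | hne
  · have hM0 : 0 < M := lt_of_le_of_lt (norm_nonneg _) (hb z (by simpa using hz))
    have hM : 0 ≤ M / s * ‖z - z‖ := by positivity
    simpa using hM
  have hv : (0:ℝ) < ‖z - x‖ := by
    simpa [norm_pos_iff, sub_eq_zero] using hne
  set v := z - x with hvdef
  set ρ := s / ‖v‖ with hρdef
  have hρ : 0 < ρ := by positivity
  have hmem : ∀ t : ℂ, t ∈ ball (0:ℂ) ρ → x + t • v ∈ ball x s := by
    intro t ht
    have : ‖t‖ < ρ := by simpa [dist_eq_norm] using ht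
    have : ‖t‖ * ‖v‖ < s := (lt_div_iff₀ hv).1 this
    simpa [dist_eq_norm, norm_smul, add_sub_cancel_left] using this
  have hdiff : DifferentiableOn ℂ (fun t : ℂ => F (x + t • v)) (ball (0:ℂ) ρ) := by
    apply hF.comp
    · exact ((differentiable_id.smul_const v).const_add x).differentiableOn
    · exact hmem
  have hmaps : MapsTo (fun t : ℂ => F (x + t • v)) (ball (0:ℂ) ρ)
      (ball (F (x + (0:ℂ) • v)) M) := by
    intro t ht
    have := hb _ (hmem t ht)
    simpa [dist_eq_norm] using this
  have h1 : (1:ℂ) ∈ ball (0:ℂ) ρ := by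
    have : ‖v‖ < s := by simpa [dist_eq_norm] using hz
    simpa [dist_eq_norm, hρdef, lt_div_iff₀ hv] using this
  have key := Complex.dist_le_div_mul_dist_of_mapsTo_ball hdiff (hmaps.mono_right ball_subset_closedBall) h1
  have e1 : x + (1:ℂ) • v = z := by simp [hvdef]
  have e0 : x + (0:ℂ) • v = x := by simp
  rw [e1, e0] at key
  have key2 : dist (F z) (F x) ≤ M / ρ * 1 := by simpa using key
  have : M / ρ * 1 = M / s * ‖v‖ := by rw [hρdef]; field_simp
  rw [dist_eq_norm] at key2
  linarith [key2]

lemma schwarz_fderiv {F : E → E} {x : E} {s M : ℝ} (hs : 0 < s) (hM : 0 < M)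
    (hF : DifferentiableOn ℂ F (ball x s))
    (hb : ∀ z ∈ ball x s, ‖F z - F x‖ < M) :
    ‖fderiv ℂ F x‖ ≤ M / s := by
  refine ContinuousLinearMap.opNorm_le_bound _ (by positivity) (fun v => ?_)
  rcases eq_or_ne v 0 with rfl | hv
  · simp
  have hvn : (0:ℝ) < ‖v‖ := norm_pos_iff.2 hv
  set ρ := s / ‖v‖ with hρdef
  have hρ : 0 < ρ := by positivity
  have hmem : ∀ t : ℂ, t ∈ ball (0:ℂ) ρ → x + t • v ∈ ball x s := by
    intro t ht
    have h1 : ‖t‖ < ρ := by simpa [dist_eq_norm] using ht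
    have : ‖t‖ * ‖v‖ < s := (lt_div_iff₀ hvn).1 h1
    simpa [dist_eq_norm, norm_smul, add_sub_cancel_left] using this
  have hdiff : DifferentiableOn ℂ (fun t : ℂ => F (x + t • v)) (ball (0:ℂ) ρ) := by
    apply hF.comp
    · exact ((differentiable_id.smul_const v).const_add x).differentiableOn
    · exact hmem
  have hmaps : MapsTo (fun t : ℂ => F (x + t • v)) (ball (0:ℂ) ρ)
      (ball (F (x + (0:ℂ) • v)) M) := by
    intro t ht
    have := hb _ (hmem t ht)
    simpa [dist_eq_norm] using this
  have hda : DifferentiableAt ℂ F x :=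
    hF.differentiableAt (isOpen_ball.mem_nhds (mem_ball_self hs))
  have hder := (line_hasDerivAt F v hda).deriv
  have key := Complex.norm_deriv_le_div_of_mapsTo_ball hdiff (hmaps.mono_right ball_subset_closedBall) hρ
  rw [hder] at key
  calc ‖fderiv ℂ F x v‖ ≤ M / ρ := key
    _ = M / s * ‖v‖ := by rw [hρdef]; field_simp

lemma schwarz_quad [CompleteSpace E] {F : E → E} {x : E} {s M : ℝ} (hs : 0 < s) (hM : 0 < M)
    (hF : DifferentiableOn ℂ F (ball x s))
    (hb : ∀ z ∈ ball x s, ‖F z - F x‖ < M) :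
    ∀ z ∈ ball x s, ‖F z - F x - fderiv ℂ F x (z - x)‖ ≤ 4 * M / s ^ 2 * ‖z - x‖ ^ 2 := by
  intro z hz
  rcases eq_or_ne z x with rfl | hne
  · simp
  have hvn : (0:ℝ) < ‖z - x‖ := by simpa [norm_pos_iff, sub_eq_zero] using hne
  set v := z - x with hvdef
  set ρ := s / ‖v‖ with hρdef
  have hρ : 0 < ρ := by positivity
  have hmem : ∀ t : ℂ, t ∈ ball (0:ℂ) ρ → x + t • v ∈ ball x s := by
    intro t ht
    have h1 : ‖t‖ < ρ := by simpa [dist_eq_norm] using ht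
    have : ‖t‖ * ‖v‖ < s := (lt_div_iff₀ hvn).1 h1
    simpa [dist_eq_norm, norm_smul, add_sub_cancel_left] using this
  set φ := fun t : ℂ => F (x + t • v) with hφdef
  have hdiff : DifferentiableOn ℂ φ (ball (0:ℂ) ρ) := by
    apply hF.comp
    · exact ((differentiable_id.smul_const v).const_add x).differentiableOn
    · exact hmem
  have hmaps : MapsTo φ (ball (0:ℂ) ρ) (ball (φ 0) M) := by
    intro t ht
    have := hb _ (hmem t ht)
    simpa [hφdef, dist_eq_norm] using this
  set χ := dslope φ 0 with hχdef
  have hχd : DifferentiableOn ℂ χ (ball (0:ℂ) ρ) :=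
    (Complex.differentiableOn_dslope (isOpen_ball.mem_nhds (mem_ball_self hρ))).mpr hdiff
  have hχb : ∀ t ∈ ball (0:ℂ) ρ, ‖χ t‖ ≤ M / ρ := fun t ht =>
    Complex.norm_dslope_le_div_of_mapsTo_ball hdiff (hmaps.mono_right ball_subset_closedBall) ht
  have hMρ : 0 < M / ρ := by positivity
  have hmaps2 : MapsTo χ (ball (0:ℂ) ρ) (ball (χ 0) (4 * M / ρ)) := by
    intro t ht
    have h1 := hχb t ht
    have h2 := hχb 0 (mem_ball_self hρ)
    have : dist (χ t) (χ 0) ≤ ‖χ t‖ + ‖χ 0‖ := by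
      rw [dist_eq_norm]; exact norm_sub_le _ _
    have h4 : (2:ℝ) * (M / ρ) < 4 * M / ρ := by
      rw [mul_div_assoc]
      linarith
    exact mem_ball.2 (lt_of_le_of_lt this (by linarith))
  have h1mem : (1:ℂ) ∈ ball (0:ℂ) ρ := by
    have : ‖v‖ < s := by simpa [hvdef, dist_eq_norm] using hz
    simpa [dist_eq_norm, hρdef, lt_div_iff₀ hvn] using this
  have key := Complex.dist_le_div_mul_dist_of_mapsTo_ball hχd (hmaps2.mono_right ball_subset_closedBall) h1mem
  have hda : DifferentiableAt ℂ F x :=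
    hF.differentiableAt (isOpen_ball.mem_nhds (mem_ball_self hs))
  have hχ0 : χ 0 = fderiv ℂ F x v := by
    rw [hχdef, dslope_same]
    exact (line_hasDerivAt F v hda).deriv
  have hχ1 : χ 1 = φ 1 - φ 0 := by
    rw [hχdef, dslope_of_ne _ one_ne_zero, slope_def_module]
    simp
  have hφ1 : φ 1 = F z := by simp [hφdef, hvdef]
  have hφ0 : φ 0 = F x := by simp [hφdef]
  have key2 : ‖F z - F x - fderiv ℂ F x v‖ ≤ 4 * M / ρ / ρ * 1 := by
    have : χ 1 - χ 0 = F z - F x - fderiv ℂ F x v := by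
      rw [hχ1, hχ0, hφ1, hφ0]
    rw [← this, ← dist_eq_norm]
    simpa using key
  have : 4 * M / ρ / ρ * 1 = 4 * M / s ^ 2 * ‖v‖ ^ 2 := by
    rw [hρdef]; field_simp
  linarith [key2]

lemma iterate_diffOn {D : Set E} {h : E → E} (hh : DifferentiableOn ℂ h D)
    (hmaps : MapsTo h D D) : ∀ m, DifferentiableOn ℂ (h^[m]) D := by
  intro m
  induction m with
  | zero => simpa using differentiableOn_id
  | succ m ih =>
    rw [Function.iterate_succ']
    exact hh.comp ih (hmaps.iterate m)

lemma iterate_contOn {D : Set E} {h : E → E} (hh : ContinuousOn h D)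
    (hmaps : MapsTo h D D) : ∀ m, ContinuousOn (h^[m]) D := by
  intro m
  induction m with
  | zero => simpa using continuousOn_id
  | succ m ih =>
    rw [Function.iterate_succ']
    exact hh.comp ih (hmaps.iterate m)

lemma fderiv_iterate_fixed {D : Set E} (hDopen : IsOpen D) {h : E → E}
    (hh : DifferentiableOn ℂ h D) (hmaps : MapsTo h D D)
    {p : E} (hp : p ∈ D) (hfix : h p = p) (m : ℕ) :
    fderiv ℂ (h^[m]) p = (fderiv ℂ h p) ^ m := by
  induction m with
  | zero =>
    rw [Function.iterate_zero, pow_zero, ContinuousLinearMap.one_def, fderiv_id]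
  | succ m ih =>
    have hdh : DifferentiableAt ℂ h p := hh.differentiableAt (hDopen.mem_nhds hp)
    have hdi : DifferentiableAt ℂ (h^[m]) p :=
      (iterate_diffOn hh hmaps m).differentiableAt (hDopen.mem_nhds hp)
    have hdh' : DifferentiableAt ℂ h (h^[m] p) := by
      rwa [Function.iterate_fixed hfix m]
    rw [Function.iterate_succ', fderiv_comp p hdh' hdi, Function.iterate_fixed hfix m,
      ih, pow_succ']
    rfl

lemma attract [CompleteSpace E] {D : Set E} (hDopen : IsOpen D) (hDbdd : IsBounded D)
    {h : E → E} (hh : DifferentiableOn ℂ h D) (hmaps : MapsTo h D D)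
    (hcpt : IsCompact (closure (h '' D))) (hsub : closure (h '' D) ⊆ D)
    {p : E} (hp : p ∈ D) (hfix : h p = p) :
    ∃ m₀, 1 ≤ m₀ ∧ ∃ r > 0, closedBall p r ⊆ D ∧
      ∀ z ∈ closedBall p r, ‖h^[m₀] z - p‖ ≤ (1/4) * ‖z - p‖ := by
  set M := Metric.diam D + 1 with hMdef
  have hM : 0 < M := by have := Metric.diam_nonneg (s := D); linarith
  have hbound : ∀ a ∈ D, ∀ b ∈ D, ‖a - b‖ < M := by
    intro a ha b hb
    have := Metric.dist_le_diam_of_mem hDbdd ha hb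
    rw [dist_eq_norm] at this
    linarith
  obtain ⟨s, spos, hsD⟩ := Metric.isOpen_iff.1 hDopen p hp
  obtain ⟨δ, δpos, hδ⟩ := hcpt.exists_thickening_subset_open hDopen hsub
  set ε := δ / (2 * M) with hεdef
  have εpos : 0 < ε := by positivity
  set c : ℂ := ((1 + ε : ℝ) : ℂ) with hcdef
  have hcnorm : ‖c‖ = 1 + ε := by
    rw [hcdef, Complex.norm_real, Real.norm_eq_abs, abs_of_pos (by linarith)]
  set h' : E → E := fun z => p + c • (h z - p) with h'def
  have h'fix : h' p = p := by simp [h'def, hfix]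
  have h'maps : MapsTo h' D D := by
    intro x hx
    have hhx : h x ∈ closure (h '' D) := subset_closure (mem_image_of_mem h hx)
    have hhxD : h x ∈ D := hsub hhx
    apply hδ
    rw [Metric.mem_thickening_iff]
    refine ⟨h x, hhx, ?_⟩
    have hc1 : c - 1 = ((ε:ℝ):ℂ) := by rw [hcdef]; push_cast; ring
    have heq : h' x - h x = (c - 1) • (h x - p) := by
      simp only [h'def, sub_smul, one_smul]
      abel
    rw [dist_eq_norm, heq, norm_smul, hc1, Complex.norm_real, Real.norm_eq_abs,
      abs_of_pos εpos]
    have h1 : ‖h x - p‖ < M := hbound _ hhxD _ hp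
    calc ε * ‖h x - p‖ ≤ ε * M := by nlinarith [εpos]
      _ = δ / 2 := by rw [hεdef]; field_simp
      _ < δ := by linarith
  have h'diff : DifferentiableOn ℂ h' D :=
    (((hh.sub_const p).const_smul c).const_add p)
  set A := fderiv ℂ h p with hAdef
  have h'fderiv : fderiv ℂ h' p = c • A := by
    have hda : DifferentiableAt ℂ h p := hh.differentiableAt (hDopen.mem_nhds hp)
    have : HasFDerivAt h' (c • A) p :=
      ((hda.hasFDerivAt.sub_const p).const_smul c).const_add p
    exact this.fderiv
  -- derivative decay
  have hdecay : ∀ m, (1 + ε) ^ m * ‖A ^ m‖ ≤ M / s := by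
    intro m
    have hiter := iterate_diffOn h'diff h'maps m
    have hdOn : DifferentiableOn ℂ (h'^[m]) (ball p s) := hiter.mono hsD
    have hb : ∀ z ∈ ball p s, ‖h'^[m] z - h'^[m] p‖ < M := by
      intro z hz
      rw [Function.iterate_fixed h'fix m]
      exact hbound _ ((h'maps.iterate m) (hsD hz)) _ hp
    have key := schwarz_fderiv spos hM hdOn hb
    rw [fderiv_iterate_fixed hDopen h'diff h'maps hp h'fix m, h'fderiv, smul_pow] at key
    rw [norm_smul, norm_pow, hcnorm] at key
    exact key
  -- choose m₀
  have htend : Tendsto (fun m : ℕ => (1 + ε) ^ m) atTop atTop :=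
    tendsto_pow_atTop_atTop_of_one_lt (by linarith)
  obtain ⟨m₀, hm₀⟩ := ((htend.eventually_ge_atTop (8 * (M / s) + 1)).and
    (eventually_ge_atTop 1)).exists
  have hMs : 0 < M / s := by positivity
  have hAm : ‖A ^ m₀‖ ≤ 1 / 8 := by
    have h1 := hdecay m₀
    have h2 : (8 * (M / s) + 1) * ‖A ^ m₀‖ ≤ (1 + ε) ^ m₀ * ‖A ^ m₀‖ :=
      mul_le_mul_of_nonneg_right hm₀.1 (norm_nonneg _)
    nlinarith [norm_nonneg (A ^ m₀), hMs]
  -- now the quadratic estimate for H := h^[m₀]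
  refine ⟨m₀, hm₀.2, min (s/2) (s^2/(32*M)), by positivity, ?_, ?_⟩
  · intro z hz
    apply hsD
    rw [mem_closedBall] at hz
    rw [mem_ball]
    calc dist z p ≤ min (s/2) (s^2/(32*M)) := hz
      _ ≤ s/2 := min_le_left _ _
      _ < s := by linarith
  · intro z hz
    rw [mem_closedBall, dist_eq_norm] at hz
    have hzball : z ∈ ball p s := by
      rw [mem_ball, dist_eq_norm]
      calc ‖z - p‖ ≤ min (s/2) (s^2/(32*M)) := hz
        _ ≤ s/2 := min_le_left _ _
        _ < s := by linarith
    have hdOn : DifferentiableOn ℂ (h^[m₀]) (ball p s) :=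
      (iterate_diffOn hh hmaps m₀).mono hsD
    have hb : ∀ y ∈ ball p s, ‖h^[m₀] y - h^[m₀] p‖ < M := by
      intro y hy
      rw [Function.iterate_fixed hfix m₀]
      exact hbound _ ((hmaps.iterate m₀) (hsD hy)) _ hp
    have hq := schwarz_quad spos hM hdOn hb z hzball
    rw [Function.iterate_fixed hfix m₀, fderiv_iterate_fixed hDopen hh hmaps hp hfix m₀] at hq
    have hlin : ‖(A ^ m₀) (z - p)‖ ≤ (1/8) * ‖z - p‖ := by
      calc ‖(A ^ m₀) (z - p)‖ ≤ ‖A ^ m₀‖ * ‖z - p‖ := ContinuousLinearMap.le_opNorm _ _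
        _ ≤ (1/8) * ‖z - p‖ := mul_le_mul_of_nonneg_right hAm (norm_nonneg _)
    have hquad : 4 * M / s ^ 2 * ‖z - p‖ ^ 2 ≤ (1/8) * ‖z - p‖ := by
      have h1 : ‖z - p‖ ≤ s^2/(32*M) := le_trans hz (min_le_right _ _)
      have h2 : 0 ≤ ‖z - p‖ := norm_nonneg _
      have h3 : 4 * M / s ^ 2 * ‖z - p‖ ≤ 1/8 := by
        rw [div_mul_eq_mul_div, div_le_iff₀ (by positivity)]
        calc 4 * M * ‖z - p‖ ≤ 4 * M * (s^2/(32*M)) := by nlinarith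
          _ = 1/8 * s^2 := by field_simp; ring
      calc 4 * M / s ^ 2 * ‖z - p‖ ^ 2 = (4 * M / s ^ 2 * ‖z - p‖) * ‖z - p‖ := by ring
        _ ≤ (1/8) * ‖z - p‖ := mul_le_mul_of_nonneg_right h3 h2
    calc ‖h^[m₀] z - p‖
        ≤ ‖h^[m₀] z - p - (A ^ m₀) (z - p)‖ + ‖(A ^ m₀) (z - p)‖ := by
          have := norm_add_le (h^[m₀] z - p - (A ^ m₀) (z - p)) ((A ^ m₀) (z - p))
          simpa using this
      _ ≤ 4 * M / s ^ 2 * ‖z - p‖ ^ 2 + (1/8) * ‖z - p‖ := add_le_add hq hlin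
      _ ≤ (1/8) * ‖z - p‖ + (1/8) * ‖z - p‖ := by linarith
      _ = (1/4) * ‖z - p‖ := by ring

lemma basin [CompleteSpace E] {D : Set E} (hDopen : IsOpen D) (hDconn : IsConnected D)
    (hDbdd : IsBounded D)
    {h : E → E} (hh : DifferentiableOn ℂ h D) (hmaps : MapsTo h D D)
    (hcpt : IsCompact (closure (h '' D))) (hsub : closure (h '' D) ⊆ D)
    {p : E} (hp : p ∈ D) (hfix : h p = p) :
    ∀ x ∈ D, ∀ ε > 0, ∃ j, ‖h^[j] x - p‖ < ε := by
  obtain ⟨m₀, hm₀1, r, rpos, hrD, hattr⟩ := attract hDopen hDbdd hh hmaps hcpt hsub hp hfix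
  set H := h^[m₀] with hHdef
  have Hdiff : DifferentiableOn ℂ H D := iterate_diffOn hh hmaps m₀
  have Hmaps : MapsTo H D D := hmaps.iterate m₀
  have Hfix : H p = p := Function.iterate_fixed hfix m₀
  -- contraction of H-orbits started in the closed ball
  have claim0 : ∀ x ∈ closedBall p r, ∀ i, ‖H^[i] x - p‖ ≤ (1/4 : ℝ)^i * ‖x - p‖ := by
    intro x hx i
    induction i with
    | zero => simp
    | succ i ih =>
      have hxr : ‖x - p‖ ≤ r := by rwa [mem_closedBall, dist_eq_norm] at hx
      have hmem : H^[i] x ∈ closedBall p r := by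
        rw [mem_closedBall, dist_eq_norm]
        calc ‖H^[i] x - p‖ ≤ (1/4:ℝ)^i * ‖x - p‖ := ih
          _ ≤ 1 * ‖x - p‖ := by
              apply mul_le_mul_of_nonneg_right _ (norm_nonneg _)
              exact pow_le_one₀ (by norm_num) (by norm_num)
          _ ≤ r := by rwa [one_mul]
      rw [Function.iterate_succ_apply']
      calc ‖H (H^[i] x) - p‖ ≤ (1/4) * ‖H^[i] x - p‖ := hattr _ hmem
        _ ≤ (1/4) * ((1/4:ℝ)^i * ‖x - p‖) := by
            apply mul_le_mul_of_nonneg_left ih (by norm_num)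
        _ = (1/4:ℝ)^(i+1) * ‖x - p‖ := by ring
  -- the basin
  set S : Set E := {x | x ∈ D ∧ ∃ j, H^[j] x ∈ ball p r} with hSdef
  have hSopen : IsOpen S := by
    rw [isOpen_iff_mem_nhds]
    rintro x ⟨hxD, j, hj⟩
    have hcont : ContinuousAt (H^[j]) x :=
      ((iterate_diffOn Hdiff Hmaps j).continuousOn).continuousAt (hDopen.mem_nhds hxD)
    have h1 : (H^[j]) ⁻¹' (ball p r) ∈ nhds x := hcont.preimage_mem_nhds
      (isOpen_ball.mem_nhds hj)
    filter_upwards [hDopen.mem_nhds hxD, h1] with y hyD hyj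
    exact ⟨hyD, j, hyj⟩
  set M := Metric.diam D + 1 with hMdef
  have hM : 0 < M := by have := Metric.diam_nonneg (s := D); linarith
  have hbound : ∀ a ∈ D, ∀ b ∈ D, ‖a - b‖ < M := by
    intro a ha b hb
    have := Metric.dist_le_diam_of_mem hDbdd ha hb
    rw [dist_eq_norm] at this
    linarith
  have hSclosed : D ∩ closure S ⊆ S := by
    rintro x ⟨hxD, hxcl⟩
    obtain ⟨ρ, ρpos, hρD⟩ := Metric.isOpen_iff.1 hDopen x hxD
    set L := M / ρ with hLdef
    have hL : 0 < L := by positivity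
    set η := min (ρ/2) (r/(4*L)) with hηdef
    have ηpos : 0 < η := by positivity
    obtain ⟨x', hx'S, hdist⟩ := Metric.mem_closure_iff.1 hxcl η ηpos
    obtain ⟨hx'D, j, hj⟩ := hx'S
    -- improved: H^[1+j] x' within r/4 of p
    have hj' : ‖H^[1+j] x' - p‖ ≤ r/4 := by
      have h1 := claim0 (H^[j] x') (ball_subset_closedBall hj) 1
      rw [Function.iterate_add_apply] at *
      have h2 : ‖H^[j] x' - p‖ ≤ r := by
        have := ball_subset_closedBall hj
        rwa [mem_closedBall, dist_eq_norm] at this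
      calc ‖H^[1] (H^[j] x') - p‖ ≤ (1/4:ℝ)^1 * ‖H^[j] x' - p‖ := h1
        _ ≤ (1/4) * r := by
            rw [pow_one]
            exact mul_le_mul_of_nonneg_left h2 (by norm_num)
        _ = r/4 := by ring
    -- Lipschitz from center
    have hlip : ‖H^[1+j] x' - H^[1+j] x‖ ≤ L * ‖x' - x‖ := by
      have hdOn : DifferentiableOn ℂ (H^[1+j]) (ball x ρ) :=
        (iterate_diffOn Hdiff Hmaps (1+j)).mono hρD
      have hb : ∀ y ∈ ball x ρ, ‖H^[1+j] y - H^[1+j] x‖ < M := by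
        intro y hy
        exact hbound _ ((Hmaps.iterate (1+j)) (hρD hy)) _ ((Hmaps.iterate (1+j)) hxD)
      have hx'ball : x' ∈ ball x ρ := by
        rw [mem_ball, dist_comm]
        calc dist x x' < η := hdist
          _ ≤ ρ/2 := min_le_left _ _
          _ < ρ := by linarith
      exact schwarz_center ρpos hdOn hb x' hx'ball
    have hx'x : ‖x' - x‖ ≤ r/(4*L) := by
      rw [← dist_eq_norm, dist_comm]
      exact le_trans hdist.le (min_le_right _ _)
    refine ⟨hxD, 1+j, ?_⟩
    rw [mem_ball, dist_eq_norm]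
    calc ‖H^[1+j] x - p‖ ≤ ‖H^[1+j] x - H^[1+j] x'‖ + ‖H^[1+j] x' - p‖ := by
          have := norm_add_le (H^[1+j] x - H^[1+j] x') (H^[1+j] x' - p)
          simpa using this
      _ ≤ L * ‖x' - x‖ + r/4 := by
          rw [norm_sub_rev]
          exact add_le_add hlip hj'
      _ ≤ L * (r/(4*L)) + r/4 := by
          have := mul_le_mul_of_nonneg_left hx'x hL.le
          linarith
      _ = r/4 + r/4 := by
          have hLne : L ≠ 0 := ne_of_gt hL
          field_simp
      _ < r := by linarith
  -- connectedness
  have hDS : D ⊆ S := by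
    have hv : IsOpen (D \ closure S) := hDopen.sdiff isClosed_closure
    have hdisj : Disjoint S (D \ closure S) := by
      rw [Set.disjoint_left]
      intro a haS ha2
      exact ha2.2 (subset_closure haS)
    have hcover : D ⊆ S ∪ (D \ closure S) := by
      intro a haD
      by_cases hcl : a ∈ closure S
      · exact Or.inl (hSclosed ⟨haD, hcl⟩)
      · exact Or.inr ⟨haD, hcl⟩
    have hne : (D ∩ S).Nonempty := by
      refine ⟨p, hp, hp, 0, ?_⟩
      simpa using mem_ball_self (x := p) rpos
    exact hDconn.isPreconnected.subset_left_of_subset_union hSopen hv hdisj hcover hne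
  -- conclusion
  intro x hxD ε εpos
  obtain ⟨-, j, hj⟩ := hDS hxD
  obtain ⟨i, hi⟩ := exists_pow_lt_of_lt_one (show (0:ℝ) < ε/r by positivity)
    (show (1/4:ℝ) < 1 by norm_num)
  refine ⟨m₀ * (i + j), ?_⟩
  have h1 := claim0 (H^[j] x) (ball_subset_closedBall hj) i
  have h2 : ‖H^[j] x - p‖ ≤ r := by
    have := ball_subset_closedBall hj
    rwa [mem_closedBall, dist_eq_norm] at this
  have h3 : h^[m₀ * (i+j)] x = H^[i] (H^[j] x) := by
    rw [Function.iterate_mul, Function.iterate_add_apply]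
  rw [h3]
  calc ‖H^[i] (H^[j] x) - p‖ ≤ (1/4:ℝ)^i * ‖H^[j] x - p‖ := h1
    _ ≤ (1/4:ℝ)^i * r := mul_le_mul_of_nonneg_left h2 (by positivity)
    _ < (ε/r) * r := by
        apply mul_lt_mul_of_pos_right hi rpos
    _ = ε := by field_simp

lemma iter_conv [ProperSpace E] {D : Set E} (hDopen : IsOpen D)
    {f : ℕ → E → E} {g : E → E}
    (hfmaps : ∀ k, MapsTo (f k) D D)
    (hgc : ContinuousOn g D) (hgmaps : MapsTo g D D)
    (hconv : ∀ C, C ⊆ D → IsCompact C → TendstoUniformlyOn (fun k => f k) g atTop C)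
    (m : ℕ) {C : Set E} (hCD : C ⊆ D) (hC : IsCompact C) :
    TendstoUniformlyOn (fun k => (f k)^[m]) (g^[m]) atTop C := by
  induction m with
  | zero =>
    rw [Metric.tendstoUniformlyOn_iff]
    intro ε εpos
    filter_upwards with k x hx
    simpa using εpos
  | succ m ih =>
    set C₁ := g^[m] '' C with hC₁def
    have hC₁cpt : IsCompact C₁ := hC.image_of_continuousOn
      ((iterate_contOn hgc hgmaps m).mono hCD)
    have hC₁D : C₁ ⊆ D := by
      rintro - ⟨x, hx, rfl⟩
      exact (hgmaps.iterate m) (hCD hx)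
    obtain ⟨d, dpos, hd⟩ := hC₁cpt.exists_thickening_subset_open hDopen hC₁D
    set C₂ := cthickening (d/2) C₁ with hC₂def
    have hC₂cpt : IsCompact C₂ := hC₁cpt.cthickening
    have hC₂D : C₂ ⊆ D :=
      (cthickening_subset_thickening' dpos (by linarith) C₁).trans hd
    have hC₁C₂ : C₁ ⊆ C₂ := self_subset_cthickening _
    rw [Metric.tendstoUniformlyOn_iff]
    intro ε εpos
    have hunif : UniformContinuousOn g C₂ :=
      hC₂cpt.uniformContinuousOn_of_continuous (hgc.mono hC₂D)
    obtain ⟨δ₁, δ₁pos, hδ₁⟩ := Metric.uniformContinuousOn_iff.1 hunif (ε/2) (half_pos εpos)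
    have E1 := Metric.tendstoUniformlyOn_iff.1 (hconv C₂ hC₂D hC₂cpt) (ε/2) (half_pos εpos)
    have E2 := Metric.tendstoUniformlyOn_iff.1 ih (min (d/2) δ₁)
      (lt_min (by linarith) δ₁pos)
    filter_upwards [E1, E2] with k h1 h2 x hx
    have hvC₁ : g^[m] x ∈ C₁ := mem_image_of_mem _ hx
    have hdist := h2 x hx
    have huC₂ : (f k)^[m] x ∈ C₂ := by
      apply Metric.thickening_subset_cthickening (d/2) C₁
      rw [Metric.mem_thickening_iff]
      exact ⟨g^[m] x, hvC₁, by
        rw [dist_comm]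
        exact lt_of_lt_of_le hdist (le_trans (min_le_left _ _) le_rfl)⟩
    have hvC₂ : g^[m] x ∈ C₂ := hC₁C₂ hvC₁
    rw [Function.iterate_succ_apply', Function.iterate_succ_apply']
    calc dist (g (g^[m] x)) (f k ((f k)^[m] x))
        ≤ dist (g (g^[m] x)) (g ((f k)^[m] x))
          + dist (g ((f k)^[m] x)) (f k ((f k)^[m] x)) := dist_triangle _ _ _
      _ < ε/2 + ε/2 := by
          apply add_lt_add
          · exact hδ₁ _ hvC₂ _ huC₂ (lt_of_lt_of_le hdist (min_le_right _ _))
          · exact h1 _ huC₂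
      _ = ε := by ring

end HeinsProofAux

open HeinsProofAux Metric Set Function Filter Bornology in
theorem heins_map_continuous (n : ℕ) (D : Set (Fin n → ℂ))
    (hDopen : IsOpen D) (hDconn : IsConnected D) (hDbdd : Bornology.IsBounded D)
    (f : ℕ → (Fin n → ℂ) → (Fin n → ℂ)) (g : (Fin n → ℂ) → (Fin n → ℂ))
    (hf : ∀ k, DifferentiableOn ℂ (f k) D) (hfmaps : ∀ k, Set.MapsTo (f k) D D)
    (hfcpt : ∀ k, IsCompact (closure (f k '' D)))
    (hfsub : ∀ k, closure (f k '' D) ⊆ D)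
    (hg : DifferentiableOn ℂ g D) (hgmaps : Set.MapsTo g D D)
    (hgcpt : IsCompact (closure (g '' D))) (hgsub : closure (g '' D) ⊆ D)
    (hconv : TendstoLocallyUniformlyOn (fun k => f k) g Filter.atTop D)
    (z : ℕ → Fin n → ℂ) (hz : ∀ k, z k ∈ D) (hzfix : ∀ k, f k (z k) = z k)
    (w : Fin n → ℂ) (hw : w ∈ D) (hwfix : g w = w) :
    Filter.Tendsto z Filter.atTop (nhds w) := by
  obtain ⟨m₀, hm₀1, r, rpos, hrD, hattr⟩ :=
    attract hDopen hDbdd hg hgmaps hgcpt hgsub hw hwfix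
  set H := g^[m₀] with hHdef
  have hconv' : ∀ C, C ⊆ D → IsCompact C → TendstoUniformlyOn (fun k => f k) g atTop C := by
    intro C hCD hC
    exact (tendstoLocallyUniformlyOn_iff_forall_isCompact hDopen).1 hconv C hCD hC
  have hIter := iter_conv hDopen hfmaps hg.continuousOn hgmaps hconv' m₀
    hrD (isCompact_closedBall w r)
  rw [Metric.tendsto_nhds]
  intro ε εpos
  set ε' := min (r/4) (3*ε/8) with hε'def
  have ε'pos : 0 < ε' := lt_min (by positivity) (by positivity)
  have hev := Metric.tendstoUniformlyOn_iff.1 hIter ε' ε'pos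
  filter_upwards [hev] with k hk
  set F := (f k)^[m₀] with hFdef
  have Ffix : F (z k) = z k := Function.iterate_fixed (hzfix k) m₀
  have hFdiff : DifferentiableOn ℂ F D := iterate_diffOn (hf k) (hfmaps k) m₀
  have hFmaps : MapsTo F D D := (hfmaps k).iterate m₀
  obtain ⟨m₁, rfl⟩ : ∃ m₁, m₀ = m₁ + 1 := ⟨m₀ - 1, (Nat.succ_pred_eq_of_pos hm₀1).symm⟩
  have hFim : F '' D ⊆ f k '' D := by
    rintro - ⟨x, hx, rfl⟩
    exact ⟨(f k)^[m₁] x, (hfmaps k).iterate m₁ hx, (Function.iterate_succ_apply' _ _ _).symm⟩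
  have hFcl : closure (F '' D) ⊆ closure (f k '' D) := closure_mono hFim
  have hFcpt : IsCompact (closure (F '' D)) :=
    (hfcpt k).of_isClosed_subset isClosed_closure hFcl
  have hFsub : closure (F '' D) ⊆ D := hFcl.trans (hfsub k)
  -- invariance of the ball
  have hinv : ∀ x ∈ closedBall w r, F x ∈ closedBall w (r/2) := by
    intro x hx
    have h1 : dist (H x) (F x) < ε' := hk x hx
    have h2 : ‖H x - w‖ ≤ (1/4) * ‖x - w‖ := hattr x hx
    have h3 : ‖x - w‖ ≤ r := by rwa [mem_closedBall, dist_eq_norm] at hx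
    rw [mem_closedBall, dist_eq_norm]
    calc ‖F x - w‖ ≤ ‖F x - H x‖ + ‖H x - w‖ := by
          have := norm_add_le (F x - H x) (H x - w); simpa using this
      _ ≤ ε' + (1/4) * ‖x - w‖ := by
          apply add_le_add _ h2
          rw [← dist_eq_norm, dist_comm]
          exact h1.le
      _ ≤ r/4 + r/4 := by
          have := min_le_left (r/4) (3*ε/8)
          have h4 : (1/4) * ‖x - w‖ ≤ r/4 := by linarith
          have h5 : ε' ≤ r/4 := by rw [hε'def]; exact min_le_left _ _
          linarith
      _ = r/2 := by ring
  -- the orbit of w under F stays in the ball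
  have horbit : ∀ j, F^[j] w ∈ closedBall w (r/2) := by
    intro j
    induction j with
    | zero => simpa using mem_closedBall_self (x := w) (by positivity : (0:ℝ) ≤ r/2)
    | succ j ih =>
      rw [Function.iterate_succ_apply']
      exact hinv _ (closedBall_subset_closedBall (by linarith) ih)
  -- z k is a limit of that orbit
  have hzball : dist (z k) w ≤ r/2 := by
    have hb := basin hDopen hDconn hDbdd hFdiff hFmaps hFcpt hFsub (hz k) Ffix w hw
    apply le_of_forall_sub_le
    intro ε₀ ε₀pos
    obtain ⟨j, hj⟩ := hb ε₀ ε₀pos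
    have h1 : dist (z k) (F^[j] w) < ε₀ := by
      rw [dist_comm, dist_eq_norm]; exact hj
    have h2 : dist (F^[j] w) w ≤ r/2 := horbit j
    have := dist_triangle (z k) (F^[j] w) w
    linarith
  have hzball' : z k ∈ closedBall w r := by
    rw [mem_closedBall]; linarith
  -- final estimate
  have h1 : dist (H (z k)) (F (z k)) < ε' := hk _ hzball'
  have h2 : ‖H (z k) - w‖ ≤ (1/4) * ‖z k - w‖ := hattr _ hzball'
  have key : ‖z k - w‖ ≤ ε' + (1/4) * ‖z k - w‖ := by
    calc ‖z k - w‖ = ‖F (z k) - w‖ := by rw [Ffix]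
      _ ≤ ‖F (z k) - H (z k)‖ + ‖H (z k) - w‖ := by
          have := norm_add_le (F (z k) - H (z k)) (H (z k) - w); simpa using this
      _ ≤ ε' + (1/4) * ‖z k - w‖ := by
          apply add_le_add _ h2
          rw [← dist_eq_norm, dist_comm]
          exact h1.le
  have hε'2 : ε' ≤ 3*ε/8 := min_le_right _ _
  rw [dist_eq_norm]
  linarith
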